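/- For every d ∈ ℕ with d ≥ 2 and every M ∈ ℝ with M ≥ 2, there exists a constant c > 0 depending only on M and d such that the following holds: for every β ∈ ℝ_{>0}, every L ∈ ℕ with L ≥ β, every choice of hopping amplitudes t_j ∈ ℝ_{>0} (j = 1,…,d) with max_j t_j = 1, every θ_{j,k} ∈ ℝ (1 ≤ j < k ≤ d) and ε_j^L ∈ {0,1} (j = 1,…,d) such that f_t > 0 and 1/β ≤ M_IR·M^{N_β + 1}, every function φ as in the context, every l ∈ ℤ with l ≥ N_β and every (ω', k') ∈ ℝ × ℝ^d, the following (finitely supported) sums satisfy: (i) (1/(β·L^d))·Σ_{(ω,k) ∈ 𝓜 × Γ(L)*} [χ̂_{≤l}(ω+ω', k+k') ≠ 0] ≤ c·f_t^{−d/2}·M^{(d+1)l}; (ii) ∫_{−∞}^{∞} dω (1/L^d)·Σ_{k ∈ Γ(L)*} [χ̂_{≤l}(ω, k+k') ≠ 0] ≤ c·f_t^{−d/2}·M^{(d+1)l}; (iii) (1/L^d)·Σ_{k ∈ Γ(L)*} [χ̂_{≤l}(ω', k+k') ≠ 0] ≤ c·f_t^{−d/2}·M^{dl}, where [P] is 1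 if P holds and 0 otherwise. -/

import Mathlib

open MeasureTheory

/-- `M_UV := (2√6/π)(2d+1)`. -/
noncomputable def MUV (d : ℕ) : ℝ := 2 * Real.sqrt 6 / Real.pi * (2 * (d : ℝ) + 1)

/-- `M_IR := (√6/π)((π²/3) M_UV² + d)^{1/2}`. -/
noncomputable def MIR (d : ℕ) : ℝ :=
  Real.sqrt 6 / Real.pi * Real.sqrt (Real.pi ^ 2 / 3 * MUV d ^ 2 + (d : ℝ))

/-- `f_t := (1/4)(min_p t_p²)(1 - (1/2) max_m (Σ_{j<m}|1+e^{iθ_{j,m}}| + Σ_{j>m}|1+e^{iθ_{m,j}}|))`. -/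
noncomputable def ftv (d : ℕ) (t : Fin d → ℝ) (θ : Fin d → Fin d → ℝ) : ℝ :=
  (1 / 4) * (⨅ p : Fin d, t p ^ 2) *
    (1 - (1 / 2) *
      ⨆ m : Fin d,
        ((∑ j : Fin d,
            if j < m then ‖1 + Complex.exp (Complex.I * (θ j m : ℂ))‖ else 0) +
          ∑ j : Fin d,
            if m < j then ‖1 + Complex.exp (Complex.I * (θ m j : ℂ))‖ else 0))

/-- `N_β := min{⌊log((π/β)((π/√3) M_IR)⁻¹)/log M⌋, 0}`. -/
noncomputable def Nbeta (d : ℕ) (M β : ℝ) : ℤ :=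
  min ⌊Real.log (Real.pi / β * (Real.pi / Real.sqrt 3 * MIR d)⁻¹) / Real.log M⌋ 0

/-- `D(ω,k) := ω² + f_t Σ_j |1 + e^{i(π/L)ε_j + i k_j}|²`. -/
noncomputable def Dfun (d L : ℕ) (a : ℝ) (ε : Fin d → ℝ) (ω : ℝ) (k : Fin d → ℝ) : ℝ :=
  ω ^ 2 + a * ∑ j : Fin d,
    ‖1 + Complex.exp (Complex.I * Complex.ofReal (Real.pi / (L : ℝ) * ε j + k j))‖ ^ 2

/-- `χ̂_{≤m}(ω,k) := φ(M_UV^{-2}ω²) φ(M_IR^{-2} M^{-2(m+1)} D(ω,k))`. -/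
noncomputable def chiHatLe (φc : ℝ → ℝ) (d L : ℕ) (M a : ℝ) (ε : Fin d → ℝ) (m : ℤ)
    (ω : ℝ) (k : Fin d → ℝ) : ℝ :=
  φc (MUV d ^ (-2 : ℤ) * ω ^ 2) *
    φc (MIR d ^ (-2 : ℤ) * M ^ (-(2 * (m + 1))) * Dfun d L a ε ω k)



lemma intCount (s : Finset ℤ) (a b : ℝ) (hab : a ≤ b) :
    (∑ n ∈ s, if a ≤ (n:ℝ) ∧ (n:ℝ) ≤ b then (1:ℝ) else 0) ≤ b - a + 1 := by
  classical
  rw [Finset.sum_boole]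
  have hsub : s.filter (fun n : ℤ => a ≤ (n:ℝ) ∧ (n:ℝ) ≤ b) ⊆ Finset.Icc ⌈a⌉ ⌊b⌋ := by
    intro n hn
    rw [Finset.mem_filter] at hn
    rw [Finset.mem_Icc]
    exact ⟨Int.ceil_le.2 hn.2.1, Int.le_floor.2 hn.2.2⟩
  have hcard := Finset.card_le_card hsub
  rw [Int.card_Icc] at hcard
  have h1 : ((⌊b⌋ + 1 - ⌈a⌉).toNat : ℝ) ≤ b - a + 1 := by
    rcases le_or_gt (⌊b⌋ + 1 - ⌈a⌉) 0 with h | h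
    · rw [Int.toNat_of_nonpos h]
      push_cast
      linarith
    · have h4 : (((⌊b⌋ + 1 - ⌈a⌉).toNat : ℤ) : ℝ) = ((⌊b⌋ + 1 - ⌈a⌉ : ℤ) : ℝ) := by
        rw [Int.toNat_of_nonneg h.le]
      push_cast at h4
      rw [h4]
      have h2 := Int.le_ceil a
      have h3 := Int.floor_le b
      linarith
  calc ((s.filter _).card : ℝ) ≤ ((⌊b⌋ + 1 - ⌈a⌉).toNat : ℝ) := by exact_mod_cast hcard
    _ ≤ b - a + 1 := h1

lemma natCount (L : ℕ) (a b : ℝ) (hab : a ≤ b) :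
    (∑ m : Fin L, if a ≤ (m:ℝ) ∧ (m:ℝ) ≤ b then (1:ℝ) else 0) ≤ b - a + 1 := by
  classical
  have h := intCount ((Finset.range L).image (fun n : ℕ => (n:ℤ))) a b hab
  rw [Finset.sum_image (by intro x _ y _ h; simpa using h)] at h
  rw [Fin.sum_univ_eq_sum_range (fun i => if a ≤ (i:ℝ) ∧ (i:ℝ) ≤ b then (1:ℝ) else 0)]
  simpa using h

lemma cos_small (y ρ : ℝ) (hρ : 0 ≤ ρ) (h : |Real.cos y| ≤ ρ) :
    ∃ n : ℤ, |y - (Real.pi/2 + n * Real.pi)| ≤ Real.pi/2 * ρ := by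
  have hπ := Real.pi_pos
  set n := round ((y - Real.pi/2)/Real.pi) with hn
  refine ⟨n, ?_⟩
  set u := y - (Real.pi/2 + n*Real.pi) with hu
  have hupi : |u| ≤ Real.pi/2 := by
    have h5 := abs_sub_round ((y - Real.pi/2)/Real.pi)
    rw [← hn] at h5
    have h6 : u = Real.pi * ((y - Real.pi/2)/Real.pi - n) := by
      field_simp [hu]
      ring
    rw [h6, abs_mul, abs_of_pos hπ]
    nlinarith [h5]
  have hcos : |Real.cos y| = |Real.sin u| := by
    have h7 : y = (u + Real.pi/2) + n*Real.pi := by rw [hu]; ring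
    rw [h7, Real.cos_add_int_mul_pi, abs_mul, Real.cos_add_pi_div_two, abs_neg]
    have habs : |((-1:ℝ)) ^ n| = 1 := by
      rcases Int.even_or_odd n with he | ho
      · rw [he.neg_one_zpow]; simp
      · rw [ho.neg_one_zpow]; simp
    rw [habs]
    simp
  have hsin : 2/Real.pi * |u| ≤ |Real.sin u| := by
    rcases le_or_gt 0 u with h0 | h0
    · rw [abs_of_nonneg h0]
      refine le_trans (Real.mul_le_sin h0 ?_) (le_abs_self _)
      rw [abs_of_nonneg h0] at hupi; exact hupi
    · rw [abs_of_neg h0]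
      have h8 : Real.sin (-u) ≤ |Real.sin u| := by
        rw [Real.sin_neg]; exact neg_le_abs _
      refine le_trans ?_ h8
      refine Real.mul_le_sin (by linarith) ?_
      rw [abs_of_neg h0] at hupi; exact hupi
  have h10 : 2/Real.pi * |u| ≤ ρ := le_trans hsin (hcos ▸ h)
  have h9 : Real.pi/2 * (2/Real.pi * |u|) = |u| := by
    field_simp
  calc |u| = Real.pi/2 * (2/Real.pi * |u|) := h9.symm
    _ ≤ Real.pi/2 * ρ := by
        exact mul_le_mul_of_nonneg_left h10 (by positivity)

lemma abs_one_add_exp (x : ℝ) :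
    ‖1 + Complex.exp (Complex.I * (x:ℂ))‖ = 2 * |Real.cos (x/2)| := by
  have key : ∀ z : ℂ, 1 + Complex.exp (2*z) = Complex.exp z * (Complex.exp z + Complex.exp (-z)) := by
    intro z
    rw [mul_add, ← Complex.exp_add, ← Complex.exp_add]
    simp [two_mul]
    ring
  have h : (1:ℂ) + Complex.exp (Complex.I * (x:ℂ)) =
      Complex.exp (Complex.I * ((x/2:ℝ):ℂ)) * (2 * ((Real.cos (x/2) : ℝ) : ℂ)) := by
    rw [Complex.ofReal_cos, Complex.cos]
    have hk := key (((x:ℂ)/2) * Complex.I)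
    rw [show (2:ℂ)*(((x:ℂ)/2) * Complex.I) = Complex.I * (x:ℂ) by ring] at hk
    push_cast
    rw [show Complex.I * ((x:ℂ)/2) = ((x:ℂ)/2) * Complex.I by ring, hk]
    ring_nf
  rw [h, norm_mul, norm_mul, Complex.norm_exp]
  simp
  have e : ‖((Real.cos (x/2) : ℝ) : ℂ)‖ = |Real.cos (x/2)| := by
    rw [Complex.norm_real, Real.norm_eq_abs]
  push_cast at e
  exact e

set_option maxHeartbeats 2000000 in
lemma count1d (L : ℕ) (hL : 1 ≤ L) (s ρ : ℝ) (hρ : 0 ≤ ρ) :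
    (∑ m : Fin L, if |Real.cos (Real.pi/(L:ℝ) * (m:ℝ) + s)| ≤ ρ then (1:ℝ) else 0)
      ≤ 3 * ((L:ℝ) * ρ) + 3 := by
  classical
  have hπ := Real.pi_pos
  have hL0 : (0:ℝ) < L := by exact_mod_cast hL
  rcases le_or_gt 1 ρ with h1 | h1
  · calc (∑ m : Fin L, if |Real.cos (Real.pi/(L:ℝ) * (m:ℝ) + s)| ≤ ρ then (1:ℝ) else 0)
        ≤ ∑ _m : Fin L, (1:ℝ) := Finset.sum_le_sum (fun m _ => by split <;> norm_num)
      _ = (L:ℝ) := by simp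
      _ ≤ 3 * ((L:ℝ) * ρ) + 3 := by nlinarith
  · set N := ⌈s/Real.pi - 1⌉ with hN
    set c : ℝ := (L:ℝ)/Real.pi with hc
    have hc0 : (0:ℝ) ≤ c := by positivity
    have hid2 : c * (Real.pi/2*ρ) = (L:ℝ)*ρ/2 := by rw [hc]; field_simp
    have hpoint : ∀ m : Fin L,
        (if |Real.cos (Real.pi/(L:ℝ) * (m:ℝ) + s)| ≤ ρ then (1:ℝ) else 0) ≤
        ∑ n ∈ Finset.Icc N (N+2),
          (if c * (Real.pi/2 + (n:ℝ)*Real.pi - s) - (L:ℝ)*ρ/2 ≤ (m:ℝ) ∧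
              (m:ℝ) ≤ c * (Real.pi/2 + (n:ℝ)*Real.pi - s) + (L:ℝ)*ρ/2 then (1:ℝ) else 0) := by
      intro m
      have hid1 : c * (Real.pi/(L:ℝ) * (m:ℝ)) = (m:ℝ) := by rw [hc]; field_simp
      split
      case isTrue hcnd =>
        obtain ⟨n, hn⟩ := cos_small _ _ hρ hcnd
        rw [abs_le] at hn
        have hm1 : (m:ℝ) + 1 ≤ (L:ℝ) := by exact_mod_cast m.isLt
        have hm0 : (0:ℝ) ≤ (m:ℝ) := by positivity
        have hyl : s ≤ Real.pi/(L:ℝ) * (m:ℝ) + s := by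
          have : (0:ℝ) ≤ Real.pi/(L:ℝ) * (m:ℝ) := by positivity
          linarith
        have hyu : Real.pi/(L:ℝ) * (m:ℝ) + s ≤ s + Real.pi := by
          have h2 : Real.pi/(L:ℝ) * (m:ℝ) ≤ Real.pi/(L:ℝ) * ((L:ℝ) - 1) := by
            apply mul_le_mul_of_nonneg_left (by linarith) (by positivity)
          have h3 : Real.pi/(L:ℝ) * ((L:ℝ) - 1) ≤ Real.pi := by
            rw [div_mul_eq_mul_div, div_le_iff₀ hL0]
            nlinarith
          linarith
        have hρπ : Real.pi/2*ρ ≤ Real.pi/2 := by nlinarith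
        have hnl : s/Real.pi - 1 ≤ (n:ℝ) := by
          rw [div_sub' (ne_of_gt hπ), div_le_iff₀ hπ]
          nlinarith [hn.1, hn.2]
        have hnu : (n:ℝ) ≤ s/Real.pi + 1 := by
          rw [div_add' _ _ _ (ne_of_gt hπ), le_div_iff₀ hπ]
          nlinarith [hn.1, hn.2]
        have hmem : n ∈ Finset.Icc N (N+2) := by
          rw [Finset.mem_Icc]
          constructor
          · exact Int.ceil_le.2 hnl
          · have h4 : s/Real.pi - 1 ≤ (N:ℝ) := Int.le_ceil _
            have : (n:ℝ) ≤ (N:ℝ) + 2 := by linarith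
            exact_mod_cast this
        have hA := mul_le_mul_of_nonneg_left hn.1 hc0
        have hB := mul_le_mul_of_nonneg_left hn.2 hc0
        have hmI : c * (Real.pi/2 + (n:ℝ)*Real.pi - s) - (L:ℝ)*ρ/2 ≤ (m:ℝ) ∧
            (m:ℝ) ≤ c * (Real.pi/2 + (n:ℝ)*Real.pi - s) + (L:ℝ)*ρ/2 := by
          constructor
          · nlinarith [hA, hid1, hid2]
          · nlinarith [hB, hid1, hid2]
        have hfin := Finset.single_le_sum (f := fun n : ℤ =>
          if c * (Real.pi/2 + (n:ℝ)*Real.pi - s) - (L:ℝ)*ρ/2 ≤ (m:ℝ) ∧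
              (m:ℝ) ≤ c * (Real.pi/2 + (n:ℝ)*Real.pi - s) + (L:ℝ)*ρ/2 then (1:ℝ) else 0)
          (fun i _ => by positivity) hmem
        simp only [if_pos hmI] at hfin
        exact hfin
      case isFalse =>
        apply Finset.sum_nonneg
        intro i _
        positivity
    calc (∑ m : Fin L, if |Real.cos (Real.pi/(L:ℝ) * (m:ℝ) + s)| ≤ ρ then (1:ℝ) else 0)
        ≤ ∑ m : Fin L, ∑ n ∈ Finset.Icc N (N+2),
          (if c * (Real.pi/2 + (n:ℝ)*Real.pi - s) - (L:ℝ)*ρ/2 ≤ (m:ℝ) ∧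
              (m:ℝ) ≤ c * (Real.pi/2 + (n:ℝ)*Real.pi - s) + (L:ℝ)*ρ/2 then (1:ℝ) else 0) :=
          Finset.sum_le_sum (fun m _ => hpoint m)
      _ = ∑ n ∈ Finset.Icc N (N+2), ∑ m : Fin L,
          (if c * (Real.pi/2 + (n:ℝ)*Real.pi - s) - (L:ℝ)*ρ/2 ≤ (m:ℝ) ∧
              (m:ℝ) ≤ c * (Real.pi/2 + (n:ℝ)*Real.pi - s) + (L:ℝ)*ρ/2 then (1:ℝ) else 0) :=
          Finset.sum_comm
      _ ≤ ∑ _n ∈ Finset.Icc N (N+2), ((L:ℝ)*ρ + 1) := by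
          refine Finset.sum_le_sum (fun n _ => ?_)
          have h5 := natCount L (c * (Real.pi/2 + (n:ℝ)*Real.pi - s) - (L:ℝ)*ρ/2)
            (c * (Real.pi/2 + (n:ℝ)*Real.pi - s) + (L:ℝ)*ρ/2) (by nlinarith)
          linarith [h5]
      _ = 3 * ((L:ℝ)*ρ) + 3 := by
          rw [Finset.sum_const, Int.card_Icc]
          rw [show N + 2 + 1 - N = 3 by ring]
          simp [nsmul_eq_mul]

set_option maxHeartbeats 2000000 in
/-- Lemma 7.1 (5): volume bounds for the supports of the infrared cut-off functions
`χ̂_{≤l}`.  The sums over the (infinite, but finitely supported) set of Matsubara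
frequencies are expressed through arbitrary finite partial sums. -/
theorem cutoff_support_bounds :
    ∀ d : ℕ, 2 ≤ d → ∀ M : ℝ, 2 ≤ M → ∃ c : ℝ, 0 < c ∧
      ∀ β : ℝ, 0 < β → ∀ L : ℕ, β ≤ (L : ℝ) →
      ∀ t : Fin d → ℝ, (∀ j, 0 < t j) → (⨆ j : Fin d, t j) = 1 →
      ∀ (θ : Fin d → Fin d → ℝ) (ε : Fin d → ℝ), (∀ j, ε j = 0 ∨ ε j = 1) →
      0 < ftv d t θ → 1 / β ≤ MIR d * M ^ (Nbeta d M β + 1) →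
      ∀ φc : ℝ → ℝ, ContDiff ℝ (⊤ : ℕ∞) φc →
      (∀ x : ℝ, x ≤ Real.pi ^ 2 / 6 → φc x = 1) →
      (∀ x : ℝ, Real.pi ^ 2 / 3 ≤ x → φc x = 0) →
      (∀ x : ℝ, deriv φc x ≤ 0) →
      (∀ (n : ℕ) (x : ℝ), |iteratedDeriv n φc x| ≤ 2 ^ n * (n.factorial : ℝ) ^ 2) →
      ∀ l : ℤ, Nbeta d M β ≤ l → ∀ (ω' : ℝ) (k' : Fin d → ℝ),
      (∀ s : Finset ℤ,
        1 / (β * (L : ℝ) ^ d) * ∑ n ∈ s, ∑ m : Fin d → Fin L,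
            (if chiHatLe φc d L M (ftv d t θ) ε l (Real.pi / β * (2 * (n : ℝ) + 1) + ω')
                (fun j => 2 * Real.pi * ((m j : ℕ) : ℝ) / (L : ℝ) + k' j) ≠ 0
              then (1 : ℝ) else 0) ≤
          c * ftv d t θ ^ (-(d : ℝ) / 2) * M ^ (((d : ℤ) + 1) * l)) ∧
      (∫ ω : ℝ,
          (1 / (L : ℝ) ^ d * ∑ m : Fin d → Fin L,
            (if chiHatLe φc d L M (ftv d t θ) ε l ω
                (fun j => 2 * Real.pi * ((m j : ℕ) : ℝ) / (L : ℝ) + k' j) ≠ 0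
              then (1 : ℝ) else 0)) ≤
          c * ftv d t θ ^ (-(d : ℝ) / 2) * M ^ (((d : ℤ) + 1) * l)) ∧
      (1 / (L : ℝ) ^ d * ∑ m : Fin d → Fin L,
          (if chiHatLe φc d L M (ftv d t θ) ε l ω'
              (fun j => 2 * Real.pi * ((m j : ℕ) : ℝ) / (L : ℝ) + k' j) ≠ 0
            then (1 : ℝ) else 0) ≤
        c * ftv d t θ ^ (-(d : ℝ) / 2) * M ^ ((d : ℤ) * l)) := by
  classical
  intro d hd M hM
  have hπ := Real.pi_pos
  have hπ1 : (1:ℝ) ≤ Real.pi := by nlinarith [Real.pi_gt_three]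
  have hπ2 : Real.pi ≤ 3.15 := Real.pi_lt_d2.le
  have hd0 : 0 < d := by omega
  have hMIR : 0 < MIR d := by
    have h6 : (0:ℝ) < Real.sqrt 6 := Real.sqrt_pos.2 (by norm_num)
    have hdR : (0:ℝ) < (d:ℝ) := by exact_mod_cast hd0
    have harg : (0:ℝ) < Real.pi^2/3 * MUV d^2 + (d:ℝ) := by positivity
    exact mul_pos (div_pos h6 hπ) (Real.sqrt_pos.2 harg)
  have hM0 : (0:ℝ) < M := by linarith
  have hM1 : (1:ℝ) ≤ M := by linarith
  have hMM : 0 < MIR d * M := mul_pos hMIR hM0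
  refine ⟨(6 * MIR d * M)^d * (4 * (MIR d * M) + 1),
    mul_pos (pow_pos (by nlinarith) d) (by nlinarith), ?_⟩
  intro β hβ L hβL t ht htsup θ ε hε hft hNb φc hφsm hφ1 hφ0 hφd hφk l hl ω' k'
  -- basic positivity facts
  have hL0 : (0:ℝ) < (L:ℝ) := lt_of_lt_of_le hβ hβL
  have hL1 : 1 ≤ L := by
    rcases Nat.eq_zero_or_pos L with h | h
    · rw [h] at hL0; norm_num at hL0
    · exact h
  -- `ftv ≤ 1/4`
  haveI : Nonempty (Fin d) := ⟨⟨0, hd0⟩⟩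
  have hA1 : (⨅ p : Fin d, t p ^ 2) ≤ 1 := by
    have h0 : t ⟨0, hd0⟩ ≤ 1 := htsup ▸ le_ciSup (Set.Finite.bddAbove (Set.finite_range t)) _
    have h1 : (⨅ p : Fin d, t p ^ 2) ≤ t ⟨0, hd0⟩ ^ 2 :=
      ciInf_le (Set.Finite.bddBelow (Set.finite_range _)) _
    nlinarith [ht ⟨0, hd0⟩]
  have hA0 : 0 ≤ (⨅ p : Fin d, t p ^ 2) := le_ciInf (fun p => sq_nonneg _)
  have hB1 : (1 - (1 / 2) *
      ⨆ m : Fin d,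
        ((∑ j : Fin d,
            if j < m then ‖1 + Complex.exp (Complex.I * (θ j m : ℂ))‖ else 0) +
          ∑ j : Fin d,
            if m < j then ‖1 + Complex.exp (Complex.I * (θ m j : ℂ))‖ else 0)) ≤ 1 := by
    have hval : (0:ℝ) ≤ ((∑ j : Fin d,
            if j < (⟨0, hd0⟩ : Fin d) then ‖1 + Complex.exp (Complex.I * (θ j ⟨0, hd0⟩ : ℂ))‖ else 0) +
          ∑ j : Fin d,
            if (⟨0, hd0⟩ : Fin d) < j then ‖1 + Complex.exp (Complex.I * (θ ⟨0, hd0⟩ j : ℂ))‖ else 0) := by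
      apply add_nonneg <;> exact Finset.sum_nonneg (fun j _ => by split <;> positivity)
    have hsup0 : (0:ℝ) ≤ ⨆ m : Fin d,
        ((∑ j : Fin d,
            if j < m then ‖1 + Complex.exp (Complex.I * (θ j m : ℂ))‖ else 0) +
          ∑ j : Fin d,
            if m < j then ‖1 + Complex.exp (Complex.I * (θ m j : ℂ))‖ else 0) :=
      le_trans hval (le_ciSup (f := fun m : Fin d =>
        ((∑ j : Fin d,
            if j < m then ‖1 + Complex.exp (Complex.I * (θ j m : ℂ))‖ else 0) +
          ∑ j : Fin d,
            if m < j then ‖1 + Complex.exp (Complex.I * (θ m j : ℂ))‖ else 0))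
        (Set.Finite.bddAbove (Set.finite_range _)) (⟨0, hd0⟩ : Fin d))
    linarith
  have hf4 : ftv d t θ ≤ 1/4 := by
    rw [ftv] at hft ⊢
    set A := (⨅ p : Fin d, t p ^ 2)
    set B := (1 - (1 / 2) *
      ⨆ m : Fin d,
        ((∑ j : Fin d,
            if j < m then ‖1 + Complex.exp (Complex.I * (θ j m : ℂ))‖ else 0) +
          ∑ j : Fin d,
            if m < j then ‖1 + Complex.exp (Complex.I * (θ m j : ℂ))‖ else 0))
    clear_value A B
    have hB0 : 0 < B := by
      by_contra hcon
      push_neg at hcon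
      nlinarith [mul_nonneg hA0 (neg_nonneg.2 hcon)]
    nlinarith [mul_nonneg (sub_nonneg.2 hA1) hB0.le]
  -- basic quantities
  set f := ftv d t θ with hfdef
  have hσ0 : (0:ℝ) < f ^ (-(1:ℝ)/2) := Real.rpow_pos_of_pos hft _
  set σ := f ^ (-(1:ℝ)/2) with hσdef
  have hσ1 : 1 ≤ σ := Real.one_le_rpow_of_pos_of_le_one_of_nonpos hft (by linarith) (by norm_num)
  have hσsq : σ^2 = f⁻¹ := by
    rw [hσdef, ← Real.rpow_natCast (f ^ (-(1:ℝ)/2)) 2, ← Real.rpow_mul hft.le]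
    norm_num [Real.rpow_neg_one]
  have hσd : σ^d = f ^ (-(d:ℝ)/2) := by
    rw [hσdef, ← Real.rpow_natCast (f ^ (-(1:ℝ)/2)) d, ← Real.rpow_mul hft.le]
    congr 1
    push_cast
    ring
  set E := M ^ (l+1) with hEdef
  have hE0 : (0:ℝ) < E := zpow_pos hM0 _
  have hβE : 1/β ≤ MIR d * E := by
    refine le_trans hNb ?_
    have h1 : M ^ (Nbeta d M β + 1) ≤ E := by
      rw [hEdef]; exact zpow_le_zpow_right₀ hM1 (by omega)
    nlinarith
  have hLE : 1/(L:ℝ) ≤ MIR d * E :=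
    le_trans (one_div_le_one_div_of_le hβ hβL) hβE
  set ρ := MIR d * E * σ with hρdef
  have hρ0 : (0:ℝ) < ρ := mul_pos (mul_pos hMIR hE0) hσ0
  have hMEρ : MIR d * E ≤ ρ := by nlinarith [mul_pos hMIR hE0]
  set R := 2 * (MIR d * E) with hRdef
  have hR0 : (0:ℝ) < R := by nlinarith [mul_pos hMIR hE0]
  -- support bound on D
  have hsupp : ∀ ω : ℝ, ∀ k : Fin d → ℝ, chiHatLe φc d L M f ε l ω k ≠ 0 →
      Dfun d L f ε ω k < R^2 := by
    intro ω k hne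
    have h2 : φc (MIR d ^ (-2:ℤ) * M ^ (-(2 * (l + 1))) * Dfun d L f ε ω k) ≠ 0 := by
      intro h0
      exact hne (by rw [chiHatLe, h0, mul_zero])
    have hlt : MIR d ^ (-2:ℤ) * M ^ (-(2 * (l + 1))) * Dfun d L f ε ω k < Real.pi^2/3 := by
      by_contra hge
      exact h2 (hφ0 _ (not_lt.1 hge))
    have hpowinv : MIR d ^ (-2:ℤ) * M ^ (-(2 * (l + 1))) = ((MIR d * E)^2)⁻¹ := by
      have e1 : MIR d ^ (-2:ℤ) = ((MIR d)^2)⁻¹ := by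
        rw [zpow_neg]
        norm_cast
      have e2 : M ^ (-(2 * (l + 1))) = (E^2)⁻¹ := by
        rw [zpow_neg, hEdef]
        congr 1
        rw [pow_two, show (2*(l+1) : ℤ) = (l+1)+(l+1) by ring, zpow_add₀ (ne_of_gt hM0)]
      rw [e1, e2, mul_pow, mul_inv]
    rw [hpowinv] at hlt
    have hme : (0:ℝ) < (MIR d * E)^2 := by positivity
    have hD' : Dfun d L f ε ω k < Real.pi^2/3 * (MIR d * E)^2 := by
      have h5 := mul_lt_mul_of_pos_left hlt hme
      rw [← mul_assoc, mul_inv_cancel₀ (ne_of_gt hme), one_mul] at h5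
      linarith [h5]
    have hπsq : Real.pi^2 ≤ 10 := by nlinarith [hπ2, hπ]
    have h3 : Real.pi^2/3 * (MIR d * E)^2 ≤ R^2 := by
      rw [hRdef]
      nlinarith [mul_le_mul_of_nonneg_right hπsq hme.le, hme.le]
    linarith
  have hωbound : ∀ ω : ℝ, ∀ k : Fin d → ℝ, chiHatLe φc d L M f ε l ω k ≠ 0 → |ω| ≤ R := by
    intro ω k hne
    have hD := hsupp ω k hne
    rw [Dfun] at hD
    have hs : (0:ℝ) ≤ f * ∑ j : Fin d,
        ‖1 + Complex.exp (Complex.I *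
          Complex.ofReal (Real.pi / (L : ℝ) * ε j + k j))‖ ^ 2 :=
      mul_nonneg hft.le (Finset.sum_nonneg fun j _ => sq_nonneg _)
    have hω2 : ω^2 ≤ R^2 := by linarith
    calc |ω| = Real.sqrt (ω^2) := (Real.sqrt_sq_eq_abs ω).symm
      _ ≤ Real.sqrt (R^2) := Real.sqrt_le_sqrt hω2
      _ = R := Real.sqrt_sq hR0.le
  have hcosb : ∀ ω : ℝ, ∀ k : Fin d → ℝ, chiHatLe φc d L M f ε l ω k ≠ 0 → ∀ j : Fin d,
      |Real.cos ((Real.pi/(L:ℝ) * ε j + k j)/2)| ≤ ρ := by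
    intro ω k hne j
    have hD := hsupp ω k hne
    rw [Dfun] at hD
    have hsingle : ‖1 + Complex.exp (Complex.I *
          Complex.ofReal (Real.pi / (L : ℝ) * ε j + k j))‖ ^ 2 ≤ ∑ j' : Fin d,
        ‖1 + Complex.exp (Complex.I *
          Complex.ofReal (Real.pi / (L : ℝ) * ε j' + k j'))‖ ^ 2 :=
      Finset.single_le_sum (f := fun j' : Fin d => ‖1 + Complex.exp (Complex.I *
          Complex.ofReal (Real.pi / (L : ℝ) * ε j' + k j'))‖ ^ 2)
        (fun i _ => sq_nonneg _) (Finset.mem_univ j)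
    rw [abs_one_add_exp] at hsingle
    have h4 : f * (2*|Real.cos ((Real.pi/(L:ℝ) * ε j + k j)/2)|)^2 < R^2 := by
      nlinarith [sq_nonneg ω, mul_le_mul_of_nonneg_left hsingle hft.le]
    have hρsq : ρ^2 * f = (MIR d * E)^2 := by
      rw [hρdef, mul_pow, hσsq]
      field_simp
    have hcsq : |Real.cos ((Real.pi/(L:ℝ) * ε j + k j)/2)|^2 ≤ ρ^2 := by
      nlinarith [hρsq, hR0, hft, sq_nonneg (|Real.cos ((Real.pi/(L:ℝ) * ε j + k j)/2)|)]
    calc |Real.cos ((Real.pi/(L:ℝ) * ε j + k j)/2)|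
        = Real.sqrt (|Real.cos ((Real.pi/(L:ℝ) * ε j + k j)/2)|^2) := by
          rw [Real.sqrt_sq (abs_nonneg _)]
      _ ≤ Real.sqrt (ρ^2) := Real.sqrt_le_sqrt hcsq
      _ = ρ := Real.sqrt_sq hρ0.le
  have hLρ : 1 ≤ (L:ℝ) * ρ := by
    rw [div_le_iff₀ hL0] at hLE
    nlinarith [hLE, hMEρ, hL0]
  -- key bound for the momentum sums
  have key : ∀ ω : ℝ, (∑ m : Fin d → Fin L,
      if chiHatLe φc d L M f ε l ω
        (fun j => 2 * Real.pi * ((m j : ℕ) : ℝ) / (L : ℝ) + k' j) ≠ 0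
      then (1:ℝ) else 0) ≤ (L:ℝ)^d * (6*ρ)^d := by
    intro ω
    have hstep : ∀ m : Fin d → Fin L,
        (if chiHatLe φc d L M f ε l ω
            (fun j => 2 * Real.pi * ((m j : ℕ) : ℝ) / (L : ℝ) + k' j) ≠ 0 then (1:ℝ) else 0)
          ≤ ∏ j : Fin d, (fun (j : Fin d) (x : Fin L) =>
              if |Real.cos (Real.pi/(L:ℝ) * (x:ℝ) + (Real.pi/(L:ℝ) * ε j / 2 + k' j / 2))| ≤ ρ
              then (1:ℝ) else 0) j (m j) := by
      intro m
      split
      case isTrue hne =>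
        have hone : ∀ j : Fin d,
            (if |Real.cos (Real.pi/(L:ℝ) * ((m j : ℕ):ℝ) + (Real.pi/(L:ℝ) * ε j / 2 + k' j / 2))| ≤ ρ
            then (1:ℝ) else 0) = 1 := by
          intro j
          rw [if_pos]
          have hcb := hcosb _ _ hne j
          have harg : (Real.pi/(L:ℝ) * ε j + (2*Real.pi*((m j : ℕ):ℝ)/(L:ℝ) + k' j))/2
              = Real.pi/(L:ℝ) * ((m j : ℕ):ℝ) + (Real.pi/(L:ℝ) * ε j / 2 + k' j / 2) := by
            ring
          rw [harg] at hcb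
          exact hcb
        exact le_of_eq (Finset.prod_eq_one (fun j _ => hone j)).symm
      case isFalse =>
        exact Finset.prod_nonneg (fun j _ => by dsimp only; positivity)
    calc (∑ m : Fin d → Fin L,
        if chiHatLe φc d L M f ε l ω
          (fun j => 2 * Real.pi * ((m j : ℕ) : ℝ) / (L : ℝ) + k' j) ≠ 0 then (1:ℝ) else 0)
        ≤ ∑ m : Fin d → Fin L, ∏ j : Fin d, (fun (j : Fin d) (x : Fin L) =>
              if |Real.cos (Real.pi/(L:ℝ) * (x:ℝ) + (Real.pi/(L:ℝ) * ε j / 2 + k' j / 2))| ≤ ρ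
              then (1:ℝ) else 0) j (m j) :=
          Finset.sum_le_sum (fun m _ => hstep m)
      _ = ∏ j : Fin d, ∑ x : Fin L,
            (if |Real.cos (Real.pi/(L:ℝ) * (x:ℝ) + (Real.pi/(L:ℝ) * ε j / 2 + k' j / 2))| ≤ ρ
            then (1:ℝ) else 0) := by
          rw [Finset.prod_univ_sum]
          rw [Fintype.piFinset_univ]
      _ ≤ ∏ _j : Fin d, ((L:ℝ) * (6*ρ)) := by
          refine Finset.prod_le_prod (fun j _ => Finset.sum_nonneg fun x _ => by positivity)
            (fun j _ => ?_)
          have hcnt := count1d L hL1 (Real.pi/(L:ℝ) * ε j / 2 + k' j / 2) ρ hρ0.le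
          have h6 : (3:ℝ) ≤ 3 * ((L:ℝ) * ρ) := by linarith
          calc (∑ x : Fin L,
              if |Real.cos (Real.pi/(L:ℝ) * (x:ℝ) + (Real.pi/(L:ℝ) * ε j / 2 + k' j / 2))| ≤ ρ
              then (1:ℝ) else 0) ≤ 3*((L:ℝ)*ρ) + 3 := hcnt
            _ ≤ (L:ℝ)*(6*ρ) := by nlinarith
      _ = (L:ℝ)^d * (6*ρ)^d := by
          rw [Finset.prod_const, Finset.card_univ, Fintype.card_fin, mul_pow]
  -- frequency count
  have hfreq : ∀ s : Finset ℤ,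
      (∑ n ∈ s, if |Real.pi/β*(2*(n:ℝ)+1) + ω'| ≤ R then (1:ℝ) else 0) ≤ β*R/Real.pi + 1 := by
    intro s
    have hβπ : (0:ℝ) ≤ β/Real.pi := by positivity
    have hab : (β/Real.pi*(-R - ω') - 1)/2 ≤ (β/Real.pi*(R - ω') - 1)/2 := by
      have h1 : β/Real.pi*(-R - ω') ≤ β/Real.pi*(R - ω') :=
        mul_le_mul_of_nonneg_left (by linarith) hβπ
      linarith
    have hpt : ∀ n : ℤ, (if |Real.pi/β*(2*(n:ℝ)+1) + ω'| ≤ R then (1:ℝ) else 0) ≤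
        (if (β/Real.pi*(-R - ω') - 1)/2 ≤ (n:ℝ) ∧ (n:ℝ) ≤ (β/Real.pi*(R - ω') - 1)/2
        then (1:ℝ) else 0) := by
      intro n
      split
      case isTrue h =>
        rw [abs_le] at h
        rw [if_pos]
        have hid : β/Real.pi * (Real.pi/β*(2*(n:ℝ)+1)) = 2*(n:ℝ)+1 := by
          field_simp
        constructor
        · have h7 := mul_le_mul_of_nonneg_left h.1 hβπ
          have h8 : β/Real.pi * (Real.pi/β*(2*(n:ℝ)+1) + ω')
              = β/Real.pi * (Real.pi/β*(2*(n:ℝ)+1)) + β/Real.pi * ω' := by ring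
          rw [h8, hid] at h7
          have h9 : β/Real.pi * (-R) = -(β/Real.pi * R) := by ring
          nlinarith [h7]
        · have h7 := mul_le_mul_of_nonneg_left h.2 hβπ
          have h8 : β/Real.pi * (Real.pi/β*(2*(n:ℝ)+1) + ω')
              = β/Real.pi * (Real.pi/β*(2*(n:ℝ)+1)) + β/Real.pi * ω' := by ring
          rw [h8, hid] at h7
          nlinarith [h7]
      case isFalse =>
        split
        · norm_num
        · norm_num
    calc (∑ n ∈ s, if |Real.pi/β*(2*(n:ℝ)+1) + ω'| ≤ R then (1:ℝ) else 0)
        ≤ ∑ n ∈ s, (if (β/Real.pi*(-R - ω') - 1)/2 ≤ (n:ℝ) ∧ (n:ℝ) ≤ (β/Real.pi*(R - ω') - 1)/2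
            then (1:ℝ) else 0) := Finset.sum_le_sum (fun n _ => hpt n)
      _ ≤ (β/Real.pi*(R - ω') - 1)/2 - (β/Real.pi*(-R - ω') - 1)/2 + 1 := intCount s _ _ hab
      _ = β*R/Real.pi + 1 := by ring
  -- main constant identity
  have hX0 : (0:ℝ) < f ^ (-(d:ℝ)/2) := Real.rpow_pos_of_pos hft _
  have hMdl0 : (0:ℝ) < M^((d:ℤ)*l) := zpow_pos hM0 _
  have hMdl10 : (0:ℝ) < M^(((d:ℤ)+1)*l) := zpow_pos hM0 _
  have hP0 : (0:ℝ) < (6*MIR d*M)^d := pow_pos (by nlinarith) d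
  have hMl0 : (0:ℝ) < M^l := zpow_pos hM0 _
  have hEml : E = M^l * M := by rw [hEdef, zpow_add₀ (ne_of_gt hM0), zpow_one]
  have hmain : (6*ρ)^d = (6*MIR d*M)^d * f ^ (-(d:ℝ)/2) * M^((d:ℤ)*l) := by
    have h6ρ : 6*ρ = (6*MIR d*M) * (M^l * σ) := by rw [hρdef, hEml]; ring
    rw [h6ρ, mul_pow (6*MIR d*M) (M^l*σ) d, mul_pow (M^l) σ d, hσd,
      ← zpow_natCast (M^l) d, ← zpow_mul,
      show l * ((d:ℕ):ℤ) = (d:ℤ)*l from by push_cast; ring]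
    ring
  have hpart3 : ∀ ω : ℝ, 1/(L:ℝ)^d * (∑ m : Fin d → Fin L,
      if chiHatLe φc d L M f ε l ω
        (fun j => 2 * Real.pi * ((m j : ℕ) : ℝ) / (L : ℝ) + k' j) ≠ 0
      then (1:ℝ) else 0) ≤ (6*ρ)^d := by
    intro ω
    have h2 : 1/(L:ℝ)^d * ((L:ℝ)^d * (6*ρ)^d) = (6*ρ)^d := by field_simp
    refine le_trans (mul_le_mul_of_nonneg_left (key ω) (by positivity)) (le_of_eq h2)
  have hfinal3 : (6*ρ)^d ≤ (6*MIR d*M)^d * (4*(MIR d*M)+1)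
      * (f ^ (-(d:ℝ)/2) * M^((d:ℤ)*l)) := by
    rw [hmain]
    nlinarith [mul_pos (mul_pos (mul_pos hP0 hX0) hMdl0) hMM]
  have hfin2 : (6*ρ)^d * (2*R) ≤ (6*MIR d*M)^d * (4*(MIR d*M)+1)
      * (f ^ (-(d:ℝ)/2) * M^(((d:ℤ)+1)*l)) := by
    have hsplit : M^(((d:ℤ)+1)*l) = M^((d:ℤ)*l) * M^l := by
      rw [← zpow_add₀ (ne_of_gt hM0)]
      congr 1
      ring
    rw [hmain, hRdef, hEml, hsplit]
    nlinarith [mul_pos (mul_pos (mul_pos hP0 hX0) hMdl0) hMl0,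
      mul_pos (mul_pos (mul_pos (mul_pos hP0 hX0) hMdl0) hMl0) hMM]
  refine ⟨?_, ?_, ?_⟩
  · -- (i) Matsubara sum
    intro s
    have hinner : ∀ n : ℤ, (∑ m : Fin d → Fin L,
        if chiHatLe φc d L M f ε l (Real.pi / β * (2 * (n:ℝ) + 1) + ω')
          (fun j => 2 * Real.pi * ((m j : ℕ) : ℝ) / (L : ℝ) + k' j) ≠ 0
        then (1:ℝ) else 0)
        ≤ (if |Real.pi/β*(2*(n:ℝ)+1) + ω'| ≤ R then (1:ℝ) else 0) * ((L:ℝ)^d * (6*ρ)^d) := by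
      intro n
      by_cases hn : |Real.pi/β*(2*(n:ℝ)+1) + ω'| ≤ R
      · rw [if_pos hn, one_mul]
        exact key _
      · rw [if_neg hn, zero_mul]
        refine le_of_eq (Finset.sum_eq_zero (fun m _ => ?_))
        rw [if_neg]
        intro hne
        exact hn (hωbound _ _ hne)
    have hsum : (∑ n ∈ s, ∑ m : Fin d → Fin L,
        if chiHatLe φc d L M f ε l (Real.pi / β * (2 * (n:ℝ) + 1) + ω')
          (fun j => 2 * Real.pi * ((m j : ℕ) : ℝ) / (L : ℝ) + k' j) ≠ 0
        then (1:ℝ) else 0) ≤ (β*R/Real.pi + 1) * ((L:ℝ)^d * (6*ρ)^d) := by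
      calc (∑ n ∈ s, ∑ m : Fin d → Fin L,
          if chiHatLe φc d L M f ε l (Real.pi / β * (2 * (n:ℝ) + 1) + ω')
            (fun j => 2 * Real.pi * ((m j : ℕ) : ℝ) / (L : ℝ) + k' j) ≠ 0
          then (1:ℝ) else 0)
          ≤ ∑ n ∈ s, (if |Real.pi/β*(2*(n:ℝ)+1) + ω'| ≤ R then (1:ℝ) else 0)
              * ((L:ℝ)^d * (6*ρ)^d) := Finset.sum_le_sum (fun n _ => hinner n)
        _ = (∑ n ∈ s, if |Real.pi/β*(2*(n:ℝ)+1) + ω'| ≤ R then (1:ℝ) else 0)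
              * ((L:ℝ)^d * (6*ρ)^d) := by rw [Finset.sum_mul]
        _ ≤ (β*R/Real.pi + 1) * ((L:ℝ)^d * (6*ρ)^d) := by
            refine mul_le_mul_of_nonneg_right (hfreq s) (by positivity)
    have hm1 : 1/(β*(L:ℝ)^d) * ((β*R/Real.pi + 1)*((L:ℝ)^d*(6*ρ)^d))
        = (R/Real.pi + 1/β) * (6*ρ)^d := by
      field_simp
    have hRπ : R/Real.pi + 1/β ≤ 2*R := by
      have h7 := div_le_self hR0.le hπ1
      have h1β : 1/β ≤ R := by
        rw [hRdef]
        nlinarith [hβE, mul_pos hMIR hE0]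
      linarith
    calc 1/(β*(L:ℝ)^d) * (∑ n ∈ s, ∑ m : Fin d → Fin L,
          if chiHatLe φc d L M f ε l (Real.pi / β * (2 * (n:ℝ) + 1) + ω')
            (fun j => 2 * Real.pi * ((m j : ℕ) : ℝ) / (L : ℝ) + k' j) ≠ 0
          then (1:ℝ) else 0)
        ≤ 1/(β*(L:ℝ)^d) * ((β*R/Real.pi + 1)*((L:ℝ)^d*(6*ρ)^d)) :=
          mul_le_mul_of_nonneg_left hsum (by positivity)
      _ = (R/Real.pi + 1/β) * (6*ρ)^d := hm1
      _ ≤ (2*R) * (6*ρ)^d := by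
          refine mul_le_mul_of_nonneg_right hRπ (by positivity)
      _ = (6*ρ)^d * (2*R) := by ring
      _ ≤ (6*MIR d*M)^d * (4*(MIR d*M)+1) * (f ^ (-(d:ℝ)/2) * M^(((d:ℤ)+1)*l)) := hfin2
      _ = (6*MIR d*M)^d * (4*(MIR d*M)+1) * f ^ (-(d:ℝ)/2) * M^(((d:ℤ)+1)*l) := by ring
  · -- (ii) frequency integral
    have hind : ∀ ω : ℝ, (1/(L:ℝ)^d * ∑ m : Fin d → Fin L,
        if chiHatLe φc d L M f ε l ω
          (fun j => 2 * Real.pi * ((m j : ℕ) : ℝ) / (L : ℝ) + k' j) ≠ 0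
        then (1:ℝ) else 0)
        ≤ Set.indicator (Set.Icc (-R) R) (fun _ => (6*ρ)^d) ω := by
      intro ω
      by_cases hω : ω ∈ Set.Icc (-R) R
      · rw [Set.indicator_of_mem hω]
        exact hpart3 ω
      · rw [Set.indicator_of_notMem hω]
        refine le_of_eq ?_
        rw [Finset.sum_eq_zero (fun m _ => ?_), mul_zero]
        rw [if_neg]
        intro hne
        exact hω (Set.mem_Icc.2 (abs_le.1 (hωbound _ _ hne)))
    have hgint : MeasureTheory.Integrable
        (Set.indicator (Set.Icc (-R) R) (fun _ => (6*ρ)^d)) := by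
      rw [MeasureTheory.integrable_indicator_iff measurableSet_Icc]
      exact MeasureTheory.integrableOn_const measure_Icc_lt_top.ne
    have hnn : ∀ ω : ℝ, (0:ℝ) ≤ 1/(L:ℝ)^d * ∑ m : Fin d → Fin L,
        (if chiHatLe φc d L M f ε l ω
          (fun j => 2 * Real.pi * ((m j : ℕ) : ℝ) / (L : ℝ) + k' j) ≠ 0
        then (1:ℝ) else 0) := by
      intro ω
      refine mul_nonneg (by positivity) (Finset.sum_nonneg (fun m _ => ?_))
      split
      · norm_num
      · norm_num
    calc (∫ ω : ℝ, (1/(L:ℝ)^d * ∑ m : Fin d → Fin L,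
          if chiHatLe φc d L M f ε l ω
            (fun j => 2 * Real.pi * ((m j : ℕ) : ℝ) / (L : ℝ) + k' j) ≠ 0
          then (1:ℝ) else 0))
        ≤ ∫ ω : ℝ, Set.indicator (Set.Icc (-R) R) (fun _ => (6*ρ)^d) ω :=
          MeasureTheory.integral_mono_of_nonneg (Filter.Eventually.of_forall hnn) hgint
            (Filter.Eventually.of_forall hind)
      _ = (6*ρ)^d * (2*R) := by
          rw [MeasureTheory.integral_indicator measurableSet_Icc,
            MeasureTheory.setIntegral_const, Real.volume_real_Icc_of_le (by linarith : -R ≤ R), smul_eq_mul]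
          ring
      _ ≤ (6*MIR d*M)^d * (4*(MIR d*M)+1) * (f ^ (-(d:ℝ)/2) * M^(((d:ℤ)+1)*l)) := hfin2
      _ = (6*MIR d*M)^d * (4*(MIR d*M)+1) * f ^ (-(d:ℝ)/2) * M^(((d:ℤ)+1)*l) := by ring
  · -- (iii) fixed frequency
    calc 1/(L:ℝ)^d * (∑ m : Fin d → Fin L,
          if chiHatLe φc d L M f ε l ω'
            (fun j => 2 * Real.pi * ((m j : ℕ) : ℝ) / (L : ℝ) + k' j) ≠ 0
          then (1:ℝ) else 0)
        ≤ (6*ρ)^d := hpart3 ω'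
      _ ≤ (6*MIR d*M)^d * (4*(MIR d*M)+1) * (f ^ (-(d:ℝ)/2) * M^((d:ℤ)*l)) := hfinal3
      _ = (6*MIR d*M)^d * (4*(MIR d*M)+1) * f ^ (-(d:ℝ)/2) * M^((d:ℤ)*l) := by ring
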